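/- Let P be a finite set and L a linear space on P (each line a proper subset of P with at least two elements, and every pair of distinct points on exactly one line). If a ∈ P, l ∈ L and a ∉ l, then s_l ≤ k_a, i.e., the number of points on l is at most the number of lines through a. -/

import Mathlib

theorem line_card_le_lines_through_point {α : Type*} [DecidableEq α] (P : Finset α) (L : Finset (Finset α))
    (hsub : ∀ l ∈ L, l ⊆ P)
    (hproper : ∀ l ∈ L, l ≠ P)
    (hcard : ∀ l ∈ L, 2 ≤ l.card)
    (hpair : ∀ x ∈ P, ∀ y ∈ P, x ≠ y → ∃! l, l ∈ L ∧ x ∈ l ∧ y ∈ l)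
    (a : α) (ha : a ∈ P) (l : Finset α) (hl : l ∈ L) (hal : a ∉ l) :
    l.card ≤ (L.filter (fun l' => a ∈ l')).card := by
  classical
  set f : α → Finset α := fun b =>
    if h : b ∈ P ∧ a ≠ b then (hpair a ha b h.1 h.2).choose else ∅ with hf
  have key : ∀ b ∈ l, (f b ∈ L ∧ a ∈ f b ∧ b ∈ f b) ∧
      (∀ m, m ∈ L ∧ a ∈ m ∧ b ∈ m → m = f b) := by
    intro b hb
    have hbP : b ∈ P := hsub l hl hb
    have hab : a ≠ b := fun h => hal (h ▸ hb)
    have h := hpair a ha b hbP hab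
    have hfb : f b = h.choose := dif_pos ⟨hbP, hab⟩
    rw [hfb]
    exact ⟨h.choose_spec.1, fun m hm => h.choose_spec.2 m hm⟩
  apply Finset.card_le_card_of_injOn f
  · intro b hb
    simp only [Finset.mem_coe, Finset.mem_filter]
    exact ⟨(key b hb).1.1, (key b hb).1.2.1⟩
  · intro b1 hb1 b2 hb2 heq
    by_contra hne
    have h1 := (key b1 hb1).1
    have h2 := (key b2 hb2).1
    have hb1P := hsub l hl hb1
    have hb2P := hsub l hl hb2
    have huniq := hpair b1 hb1P b2 hb2P hne
    have e1 : l = huniq.choose := huniq.choose_spec.2 l ⟨hl, hb1, hb2⟩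
    have e2 : f b1 = huniq.choose :=
      huniq.choose_spec.2 (f b1) ⟨h1.1, h1.2.2, heq ▸ h2.2.2⟩
    exact hal (e1 ▸ e2 ▸ h1.2.1)
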